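/- Privacy amplification by subsampling: Let 0 < q < 1/2 and let μ₀, μ₁ be probability measures with μ₁ (ε,δ)-DP close to μ₀. Then the mixture μ = (1−q)·μ₀ + q·μ₁ is (ε', qδ)-DP close to μ₀, where ε' = log(q(e^ε − 1) + 1). -/
import Mathlib


open MeasureTheory Real

/-- Two measures are `(ε,δ)`-DP close if for all measurable sets `A`,
`μ A ≤ e^ε · μ' A + δ` and `μ' A ≤ e^ε · μ A + δ`. -/
def DPClose {α : Type*} [MeasurableSpace α] (μ μ' : Measure α) (ε δ : ℝ) : Prop :=
  ∀ A : Set α, MeasurableSet A →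
    μ A ≤ ENNReal.ofReal (Real.exp ε) * μ' A + ENNReal.ofReal δ ∧
    μ' A ≤ ENNReal.ofReal (Real.exp ε) * μ A + ENNReal.ofReal δ

/-- Privacy amplification by subsampling: the mixture `(1-q)·μ₀ + q·μ₁` is
`(log(q(e^ε-1)+1), qδ)`-DP close to `μ₀`. -/
theorem dpClose_subsampling {α : Type*} [MeasurableSpace α]
    (μ₀ μ₁ : Measure α) [IsProbabilityMeasure μ₀] [IsProbabilityMeasure μ₁]
    (q ε δ : ℝ) (hq0 : 0 < q) (hq : q < 1 / 2) (hε : 0 ≤ ε) (hδ : 0 ≤ δ)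
    (h : DPClose μ₁ μ₀ ε δ) :
    DPClose (ENNReal.ofReal (1 - q) • μ₀ + ENNReal.ofReal q • μ₁) μ₀
      (Real.log (q * (Real.exp ε - 1) + 1)) (q * δ) := by
  intro A hA
  set x := Real.exp ε with hxdef
  have hx1 : (1:ℝ) ≤ x := Real.one_le_exp hε
  have hx0 : 0 < x := Real.exp_pos ε
  have he'pos : 0 < q * (x - 1) + 1 := by nlinarith
  have hlog : Real.exp (Real.log (q * (x - 1) + 1)) = q * (x - 1) + 1 :=
    Real.exp_log he'pos
  obtain ⟨h1, h2⟩ := h A hA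
  have hμ0A : μ₀ A ≠ ⊤ := measure_ne_top _ _
  have hμ1A : μ₁ A ≠ ⊤ := measure_ne_top _ _
  set a := (μ₀ A).toReal with ha
  set b := (μ₁ A).toReal with hb
  have ha0 : 0 ≤ a := ENNReal.toReal_nonneg
  have hb0 : 0 ≤ b := ENNReal.toReal_nonneg
  have hμ0 : μ₀ A = ENNReal.ofReal a := (ENNReal.ofReal_toReal hμ0A).symm
  have hμ1 : μ₁ A = ENNReal.ofReal b := (ENNReal.ofReal_toReal hμ1A).symm
  -- real version of the hypotheses
  have hab : b ≤ x * a + δ := by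
    rw [hμ0, hμ1, ← ENNReal.ofReal_mul hx0.le, ← ENNReal.ofReal_add (by positivity) hδ] at h1
    exact (ENNReal.ofReal_le_ofReal_iff (by positivity)).1 h1
  have hba : a ≤ x * b + δ := by
    rw [hμ0, hμ1, ← ENNReal.ofReal_mul hx0.le, ← ENNReal.ofReal_add (by positivity) hδ] at h2
    exact (ENNReal.ofReal_le_ofReal_iff (by positivity)).1 h2
  have hmix : (ENNReal.ofReal (1 - q) • μ₀ + ENNReal.ofReal q • μ₁) A
      = ENNReal.ofReal ((1 - q) * a + q * b) := by
    rw [Measure.add_apply, Measure.smul_apply, Measure.smul_apply, smul_eq_mul, smul_eq_mul,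
      hμ0, hμ1, ← ENNReal.ofReal_mul (by linarith), ← ENNReal.ofReal_mul hq0.le,
      ← ENNReal.ofReal_add (by nlinarith) (by positivity)]
  have hq1 : q < 1 := by linarith
  constructor
  · rw [hmix, hμ0, hlog, ← ENNReal.ofReal_mul he'pos.le,
      ← ENNReal.ofReal_add (by nlinarith) (by positivity)]
    apply ENNReal.ofReal_le_ofReal
    nlinarith [mul_nonneg hq0.le ha0]
  · have hmixnn : (0:ℝ) ≤ (1 - q) * a + q * b :=
      add_nonneg (mul_nonneg (by linarith) ha0) (mul_nonneg hq0.le hb0)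
    rw [hmix, hμ0, hlog, ← ENNReal.ofReal_mul he'pos.le,
      ← ENNReal.ofReal_add (mul_nonneg he'pos.le hmixnn) (by positivity)]
    apply ENNReal.ofReal_le_ofReal
    have key : 0 ≤ (q * (x - 1) + 1) * ((1 - q) * x + q) - x := by
      nlinarith [mul_nonneg (mul_nonneg hq0.le (by linarith : (0:ℝ) ≤ 1 - q)) (sq_nonneg (x - 1))]
    have hgoal : a * x ≤ ((q * (x - 1) + 1) * ((1 - q) * a + q * b) + q * δ) * x := by
      nlinarith [mul_nonneg (mul_nonneg he'pos.le hq0.le) (by linarith : (0:ℝ) ≤ x * b + δ - a),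
        mul_nonneg ha0 key,
        mul_nonneg (mul_nonneg hq0.le hδ) (by nlinarith : (0:ℝ) ≤ x - (q * (x - 1) + 1))]
    exact le_of_mul_le_mul_right hgoal hx0
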